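/- The sequence H(N,1/2) = (1/(N·2^N)) Σ_{k=0}^{N} C(N,k) log₂ C(N,k) converges to 1 as N → ∞. -/

import Mathlib

open Finset Filter

/-- `H(N,1/2) = (1/(N·2^N)) ∑_{k=0}^{N} C(N,k) log₂ C(N,k)`. -/
noncomputable def Hhalf (N : ℕ) : ℝ :=
  (1 / ((N : ℝ) * 2 ^ N)) * ∑ k ∈ Finset.range (N + 1),
    (N.choose k : ℝ) * Real.logb 2 (N.choose k)

lemma choose_pos' (N k : ℕ) (hk : k ∈ Finset.range (N + 1)) :
    (0 : ℝ) < (N.choose k : ℝ) := by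
  exact_mod_cast Nat.choose_pos (Finset.mem_range_succ_iff.mp hk)

lemma sum_choose_cast (N : ℕ) :
    ∑ k ∈ Finset.range (N + 1), (N.choose k : ℝ) = 2 ^ N := by
  exact_mod_cast congrArg (Nat.cast : ℕ → ℝ) (Nat.sum_range_choose N)

lemma choose_le_two_pow' (N k : ℕ) (hk : k ∈ Finset.range (N + 1)) :
    (N.choose k : ℝ) ≤ 2 ^ N := by
  rw [← sum_choose_cast N]
  exact Finset.single_le_sum (fun i hi => (choose_pos' N i hi).le) hk

lemma sum_upper (N : ℕ) :
    ∑ k ∈ Finset.range (N + 1), (N.choose k : ℝ) * Real.logb 2 (N.choose k)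
      ≤ (N : ℝ) * 2 ^ N := by
  calc ∑ k ∈ Finset.range (N + 1), (N.choose k : ℝ) * Real.logb 2 (N.choose k)
      ≤ ∑ k ∈ Finset.range (N + 1), (N.choose k : ℝ) * N := by
        apply Finset.sum_le_sum
        intro k hk
        apply mul_le_mul_of_nonneg_left _ (choose_pos' N k hk).le
        have : Real.logb 2 (N.choose k) ≤ Real.logb 2 ((2 : ℝ) ^ N) :=
          Real.logb_le_logb_of_le one_lt_two (choose_pos' N k hk)
            (choose_le_two_pow' N k hk)
        simpa [Real.logb_pow, Real.logb_self_eq_one] using this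
    _ = (N : ℝ) * 2 ^ N := by
        rw [← Finset.sum_mul, sum_choose_cast]; ring

lemma sum_lower (N : ℕ) :
    (N : ℝ) * 2 ^ N - 2 ^ N * Real.logb 2 (N + 1)
      ≤ ∑ k ∈ Finset.range (N + 1), (N.choose k : ℝ) * Real.logb 2 (N.choose k) := by
  set w : ℕ → ℝ := fun k => (N.choose k : ℝ) / 2 ^ N with hw
  set p : ℕ → ℝ := fun k => (2 : ℝ) ^ N / (N.choose k : ℝ) with hp
  have h2 : (0 : ℝ) < 2 ^ N := by positivity
  have hw0 : ∀ k ∈ Finset.range (N + 1), 0 ≤ w k := fun k hk =>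
    div_nonneg (choose_pos' N k hk).le h2.le
  have hw1 : ∑ k ∈ Finset.range (N + 1), w k = 1 := by
    rw [hw, ← Finset.sum_div, sum_choose_cast, div_self h2.ne']
  have hpmem : ∀ k ∈ Finset.range (N + 1), p k ∈ Set.Ioi (0 : ℝ) := fun k hk =>
    div_pos h2 (choose_pos' N k hk)
  have jensen := strictConcaveOn_log_Ioi.concaveOn.le_map_sum hw0 hw1 hpmem
  have hsum : ∑ k ∈ Finset.range (N + 1), w k • p k = (N : ℝ) + 1 := by
    have : ∀ k ∈ Finset.range (N + 1), w k • p k = 1 := by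
      intro k hk
      have hc := choose_pos' N k hk
      simp only [hw, hp, smul_eq_mul]
      field_simp
    rw [Finset.sum_congr rfl this]
    simp
  rw [hsum] at jensen
  -- rewrite LHS of jensen
  have hL : (0 : ℝ) < Real.log 2 := Real.log_pos one_lt_two
  have hterm : ∀ k ∈ Finset.range (N + 1),
      w k • Real.log (p k)
        = Real.log 2 / 2 ^ N *
          ((N : ℝ) * (N.choose k : ℝ) - (N.choose k : ℝ) * Real.logb 2 (N.choose k)) := by
    intro k hk
    have hc := choose_pos' N k hk
    simp only [hw, hp, smul_eq_mul, Real.logb, Real.log_div h2.ne' hc.ne',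
      Real.log_pow]
    field_simp
  rw [Finset.sum_congr rfl hterm, ← Finset.mul_sum] at jensen
  -- jensen : (log 2 / 2^N) * ∑ (N*C - C*logb 2 C) ≤ log (N+1)
  have hlogb : Real.log ((N : ℝ) + 1) = Real.log 2 * Real.logb 2 ((N : ℝ) + 1) := by
    rw [Real.logb]
    field_simp
  rw [hlogb] at jensen
  have h3 : ∑ k ∈ Finset.range (N + 1),
      ((N : ℝ) * (N.choose k : ℝ) - (N.choose k : ℝ) * Real.logb 2 (N.choose k))
      = (N : ℝ) * 2 ^ N
        - ∑ k ∈ Finset.range (N + 1), (N.choose k : ℝ) * Real.logb 2 (N.choose k) := by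
    rw [Finset.sum_sub_distrib, ← Finset.mul_sum, sum_choose_cast]
  rw [h3] at jensen
  -- jensen : log 2 / 2^N * (N*2^N - S) ≤ log 2 * logb 2 (N+1)
  set S := ∑ k ∈ Finset.range (N + 1), (N.choose k : ℝ) * Real.logb 2 (N.choose k) with hS
  have jensen' : ((N : ℝ) * 2 ^ N - S) / 2 ^ N ≤ Real.logb 2 ((N : ℝ) + 1) := by
    have h5 : Real.log 2 / 2 ^ N * ((N : ℝ) * 2 ^ N - S)
        = Real.log 2 * (((N : ℝ) * 2 ^ N - S) / 2 ^ N) := by ring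
    rw [h5] at jensen
    exact (mul_le_mul_iff_of_pos_left hL).mp jensen
  have h6 := (div_le_iff₀ h2).mp jensen'
  nlinarith [h6]

/-- The sequence `H(N,1/2)` converges to `1` as `N → ∞`. -/
theorem Hhalf_tendsto_one : Tendsto Hhalf atTop (nhds 1) := by
  have t1 := Real.tendsto_pow_log_div_mul_add_atTop 1 (-1) 1 one_ne_zero
  have t2 : Tendsto (fun N : ℕ => (N : ℝ) + 1) atTop atTop :=
    tendsto_atTop_add_const_right atTop 1 tendsto_natCast_atTop_atTop
  have t3 := t1.comp t2
  have t4 : Tendsto (fun N : ℕ => Real.log ((N : ℝ) + 1) / (N : ℝ)) atTop (nhds 0) := by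
    convert t3 using 2 with N
    simp [Function.comp]
  have t5 : Tendsto (fun N : ℕ => Real.logb 2 ((N : ℝ) + 1) / (N : ℝ)) atTop (nhds 0) := by
    have heq : (fun N : ℕ => Real.logb 2 ((N : ℝ) + 1) / (N : ℝ))
        = fun N : ℕ => Real.log ((N : ℝ) + 1) / (N : ℝ) / Real.log 2 := by
      funext N
      rw [Real.logb]
      ring
    rw [heq]
    simpa using t4.div_const (Real.log 2)
  have tlow : Tendsto (fun N : ℕ => 1 - Real.logb 2 ((N : ℝ) + 1) / (N : ℝ))
      atTop (nhds 1) := by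
    simpa using (tendsto_const_nhds (x := (1:ℝ)) (f := atTop)).sub t5
  refine tendsto_of_tendsto_of_tendsto_of_le_of_le' tlow tendsto_const_nhds ?_ ?_
  · filter_upwards [eventually_ge_atTop 1] with N hN
    have hN1 : (1 : ℝ) ≤ (N : ℝ) := by exact_mod_cast hN
    have hNpos : (0 : ℝ) < N := by linarith
    have h2 : (0 : ℝ) < 2 ^ N := by positivity
    have key : (1 / ((N : ℝ) * 2 ^ N)) * ((N : ℝ) * 2 ^ N - 2 ^ N * Real.logb 2 ((N : ℝ) + 1))
        = 1 - Real.logb 2 ((N : ℝ) + 1) / (N : ℝ) := by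
      field_simp
    rw [← key, Hhalf]
    exact mul_le_mul_of_nonneg_left (sum_lower N) (by positivity)
  · filter_upwards [eventually_ge_atTop 1] with N hN
    have hN1 : (1 : ℝ) ≤ (N : ℝ) := by exact_mod_cast hN
    have hNpos : (0 : ℝ) < N := by linarith
    have h2 : (0 : ℝ) < 2 ^ N := by positivity
    rw [Hhalf]
    calc (1 / ((N : ℝ) * 2 ^ N)) * ∑ k ∈ Finset.range (N + 1),
          (N.choose k : ℝ) * Real.logb 2 (N.choose k)
        ≤ (1 / ((N : ℝ) * 2 ^ N)) * ((N : ℝ) * 2 ^ N) :=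
          mul_le_mul_of_nonneg_left (sum_upper N) (by positivity)
      _ = 1 := by field_simp
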